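/- For ε ∈ {±1} and d ∈ [1,ℓ−1], among permutations π ∈ S_ℓ with #D(π) = d, the maximum of −(ℓ(ℓ−ε)/2)d + ∑_{ν∈D(π)} ν(ν−ε)/2 + inv(π) equals d·(−ℓ(d−1)/2 + (1/6)(d+1)(d − (5−3ε)/2)), and it is attained by exactly one permutation. -/

import Mathlib

open scoped Classical

/-- The descent set of a permutation of `{1,…,ℓ}` (positions encoded by `Fin ℓ`). -/
noncomputable def descents (ℓ : ℕ) (π : Equiv.Perm (Fin ℓ)) : Finset ℕ :=
  (Finset.Icc 1 (ℓ - 1)).filter fun i =>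
    ∃ (h1 : i - 1 < ℓ) (h2 : i < ℓ), π ⟨i, h2⟩ < π ⟨i - 1, h1⟩

/-- The number of inversions of `π`. -/
noncomputable def invCount (ℓ : ℕ) (π : Equiv.Perm (Fin ℓ)) : ℕ :=
  (Finset.univ.filter fun p : Fin ℓ × Fin ℓ => p.1 < p.2 ∧ π p.2 < π p.1).card

/-- The exponent `−(ℓ(ℓ−ε)/2)·#D(π) + ∑_{ν ∈ D(π)} ν(ν−ε)/2 + inv(π)` attached to `π`. -/
noncomputable def expInt (ℓ : ℕ) (ε : ℤ) (π : Equiv.Perm (Fin ℓ)) : ℤ :=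
  -((ℓ : ℤ) * ((ℓ : ℤ) - ε) / 2) * ((descents ℓ π).card : ℤ)
    + ∑ ν ∈ descents ℓ π, (ν : ℤ) * ((ν : ℤ) - ε) / 2 + (invCount ℓ π : ℤ)

namespace ASH
open Finset

noncomputable def code (ℓ : ℕ) (π : Equiv.Perm (Fin ℓ)) (i : Fin ℓ) : ℕ :=
  (Finset.univ.filter fun j : Fin ℓ => j < i ∧ π i < π j).card

noncomputable def mfn (D : Finset ℕ) (k : ℕ) : ℕ := (D.filter (· ≤ k)).card

variable {ℓ : ℕ}

lemma code_le (π : Equiv.Perm (Fin ℓ)) (i : Fin ℓ) : code ℓ π i ≤ (i : ℕ) := by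
  have h : (Finset.univ.filter fun j : Fin ℓ => j < i ∧ π i < π j) ⊆ Finset.Iio i := by
    intro j hj
    simp only [mem_filter] at hj
    exact Finset.mem_Iio.2 hj.2.1
  simpa [code, Fin.card_Iio] using Finset.card_le_card h

lemma invCount_eq_sum_code (π : Equiv.Perm (Fin ℓ)) :
    invCount ℓ π = ∑ i : Fin ℓ, code ℓ π i := by
  rw [invCount,
    Finset.card_eq_sum_card_fiberwise (f := fun p : Fin ℓ × Fin ℓ => p.2)
      (t := Finset.univ) (fun p _ => Finset.mem_univ _)]
  refine Finset.sum_congr rfl fun i _ => ?_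
  rw [code]
  apply Finset.card_bij (fun p _ => p.1)
  · intro p hp
    simp only [mem_filter, mem_univ, true_and] at hp ⊢
    obtain ⟨⟨h1, h2⟩, h3⟩ := hp
    subst h3; exact ⟨h1, h2⟩
  · intro p hp q hq h
    simp only [mem_filter, mem_univ, true_and] at hp hq
    exact Prod.ext h (hp.2.trans hq.2.symm)
  · intro j hj
    simp only [mem_filter, mem_univ, true_and] at hj
    exact ⟨(j, i), by simp [hj], rfl⟩

lemma mem_descents_iff (π : Equiv.Perm (Fin ℓ)) {i : ℕ} :
    i ∈ descents ℓ π ↔ (1 ≤ i ∧ i ≤ ℓ - 1) ∧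
      ∃ (h1 : i - 1 < ℓ) (h2 : i < ℓ), π ⟨i, h2⟩ < π ⟨i - 1, h1⟩ := by
  simp [descents, Finset.mem_filter, Finset.mem_Icc]

lemma descents_subset (π : Equiv.Perm (Fin ℓ)) : descents ℓ π ⊆ Finset.Icc 1 (ℓ - 1) :=
  Finset.filter_subset _ _

lemma code_lt_of_descent (π : Equiv.Perm (Fin ℓ)) {i : ℕ} (h1 : i - 1 < ℓ) (h2 : i < ℓ)
    (hi : 1 ≤ i) (hd : π ⟨i, h2⟩ < π ⟨i - 1, h1⟩) :
    code ℓ π ⟨i - 1, h1⟩ < code ℓ π ⟨i, h2⟩ := by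
  set A := (Finset.univ.filter fun j : Fin ℓ => j < ⟨i - 1, h1⟩ ∧ π ⟨i - 1, h1⟩ < π j)
  set B := (Finset.univ.filter fun j : Fin ℓ => j < ⟨i, h2⟩ ∧ π ⟨i, h2⟩ < π j)
  have hnm : (⟨i - 1, h1⟩ : Fin ℓ) ∉ A := by
    simp only [A, Finset.mem_filter, Finset.mem_univ, true_and, not_and]
    intro h
    exact absurd h (lt_irrefl _)
  have hsub : insert (⟨i - 1, h1⟩ : Fin ℓ) A ⊆ B := by
    intro j hj
    rcases Finset.mem_insert.1 hj with rfl | hj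
    · simp only [B, mem_filter, mem_univ, true_and]
      exact ⟨Fin.mk_lt_mk.2 (by omega), hd⟩
    · simp only [A, mem_filter, mem_univ, true_and] at hj
      simp only [B, mem_filter, mem_univ, true_and]
      refine ⟨lt_trans hj.1 (Fin.mk_lt_mk.2 (by omega)), lt_trans hd hj.2⟩
  calc A.card < A.card + 1 := Nat.lt_succ_self _
    _ = (insert (⟨i - 1, h1⟩ : Fin ℓ) A).card := (Finset.card_insert_of_notMem hnm).symm
    _ ≤ B.card := Finset.card_le_card hsub

lemma code_le_of_not_descent (π : Equiv.Perm (Fin ℓ)) {i : ℕ} (h1 : i - 1 < ℓ) (h2 : i < ℓ)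
    (hi : 1 ≤ i) (hnd : ¬ π ⟨i, h2⟩ < π ⟨i - 1, h1⟩) :
    code ℓ π ⟨i, h2⟩ ≤ code ℓ π ⟨i - 1, h1⟩ := by
  have hne : (⟨i - 1, h1⟩ : Fin ℓ) ≠ ⟨i, h2⟩ := by
    simp only [ne_eq, Fin.mk.injEq]; omega
  have hlt : π ⟨i - 1, h1⟩ < π ⟨i, h2⟩ := by
    rcases lt_or_gt_of_ne ((Equiv.injective π).ne hne) with h | h
    · exact h
    · exact absurd h hnd
  apply Finset.card_le_card
  intro j hj
  simp only [mem_filter, mem_univ, true_and] at hj ⊢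
  have hji : (j : ℕ) < i := hj.1
  have hjne : j ≠ (⟨i - 1, h1⟩ : Fin ℓ) := by
    intro h; subst h; exact absurd (lt_trans hlt hj.2) (lt_irrefl _)
  constructor
  · simp only [Fin.lt_def] at hji ⊢
    have : (j : ℕ) ≠ i - 1 := fun h => hjne (Fin.ext h)
    omega
  · exact lt_trans hlt hj.2
lemma mfn_mono (D : Finset ℕ) {k k' : ℕ} (h : k ≤ k') : mfn D k ≤ mfn D k' := by
  apply Finset.card_le_card
  intro ν hν
  simp only [Finset.mem_filter] at hν ⊢
  exact ⟨hν.1, le_trans hν.2 h⟩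

lemma mfn_lower (π : Equiv.Perm (Fin ℓ)) (k : ℕ) :
    (descents ℓ π).card ≤ mfn (descents ℓ π) k + (ℓ - 1 - k) := by
  classical
  have hsplit : ((descents ℓ π).filter (· ≤ k)).card
      + ((descents ℓ π).filter fun ν => ¬ ν ≤ k).card = (descents ℓ π).card :=
    Finset.card_filter_add_card_filter_not _
  have hsub : ((descents ℓ π).filter fun ν => ¬ ν ≤ k) ⊆ Finset.Icc (k + 1) (ℓ - 1) := by
    intro ν hν
    simp only [Finset.mem_filter, not_le] at hν
    have := descents_subset π hν.1
    simp only [Finset.mem_Icc] at this ⊢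
    omega
  have hc := Finset.card_le_card hsub
  rw [Nat.card_Icc] at hc
  rw [mfn]
  omega

lemma mfn_zero_of_lt_one (π : Equiv.Perm (Fin ℓ)) {k : ℕ} (hk : k = 0) :
    mfn (descents ℓ π) k = 0 := by
  rw [mfn, Finset.card_eq_zero, Finset.filter_eq_empty_iff]
  intro ν hν
  have := descents_subset π hν
  simp only [Finset.mem_Icc] at this
  omega

lemma code_eq_zero_of_mfn_zero (π : Equiv.Perm (Fin ℓ)) :
    ∀ (k : ℕ) (hk : k < ℓ), mfn (descents ℓ π) k = 0 → code ℓ π ⟨k, hk⟩ = 0 := by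
  intro k
  induction k with
  | zero => intro hk _; have := code_le π ⟨0, hk⟩; simpa using this
  | succ n ih =>
    intro hk hm
    have hn : n < ℓ := lt_trans (Nat.lt_succ_self n) hk
    have hmn : mfn (descents ℓ π) n = 0 :=
      Nat.le_antisymm (hm ▸ mfn_mono _ (Nat.le_succ n)) (Nat.zero_le _)
    have hnd : (n + 1) ∉ descents ℓ π := by
      intro hmem
      have h1 : (n + 1) ∈ (descents ℓ π).filter (· ≤ n + 1) :=
        Finset.mem_filter.2 ⟨hmem, le_refl _⟩
      have := Finset.card_pos.2 ⟨_, h1⟩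
      rw [mfn] at hm
      omega
    have hnd' : ¬ π ⟨n + 1, hk⟩ < π ⟨n, hn⟩ := by
      intro hlt
      apply hnd
      rw [mem_descents_iff]
      exact ⟨⟨by omega, by omega⟩, by omega, hk, hlt⟩
    have hle : code ℓ π ⟨n + 1, hk⟩ ≤ code ℓ π ⟨n, hn⟩ :=
      code_le_of_not_descent π (by omega) hk (by omega) hnd'
    have hz := ih hn hmn
    omega
noncomputable def expInt' (ℓ : ℕ) (ε : ℤ) (π : Equiv.Perm (Fin ℓ)) : ℤ :=
  -((ℓ : ℤ) * ((ℓ : ℤ) - ε) / 2) * ((descents ℓ π).card : ℤ)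
    + ∑ ν ∈ descents ℓ π, (ν : ℤ) * ((ν : ℤ) - ε) / 2 + (invCount ℓ π : ℤ)

lemma half_mul_two {ε : ℤ} (hε : ε = 1 ∨ ε = -1) (n : ℤ) :
    n * (n - ε) / 2 * 2 = n * (n - ε) := by
  apply Int.ediv_mul_cancel
  rcases hε with rfl | rfl
  · have h := Int.even_mul_succ_self (n - 1)
    have h2 : (n - 1) * (n - 1 + 1) = n * (n - 1) := by ring
    rw [h2] at h
    exact h.two_dvd
  · have h := Int.even_mul_succ_self n
    have h2 : n * (n + 1) = n * (n - (-1)) := by ring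
    rw [h2] at h
    exact h.two_dvd

lemma sum_weight (ε : ℤ) (n : ℕ) :
    ∑ k ∈ Finset.range n, ((2 * (k : ℤ) + 1) - ε) = (n : ℤ) * ((n : ℤ) - ε) := by
  induction n with
  | zero => simp
  | succ m ih => rw [Finset.sum_range_succ, ih]; push_cast; ring

lemma I1 (ε : ℤ) {ν : ℕ} (h : ν ≤ ℓ) :
    ∑ k ∈ Finset.Ico ν ℓ, ((2 * (k : ℤ) + 1) - ε)
      = (ℓ : ℤ) * ((ℓ : ℤ) - ε) - (ν : ℤ) * ((ν : ℤ) - ε) := by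
  rw [Finset.sum_Ico_eq_sub _ h, sum_weight, sum_weight]

lemma swap_sum (D : Finset ℕ) (f : ℕ → ℤ) :
    ∑ ν ∈ D, ∑ k ∈ Finset.Ico ν ℓ, f k
      = ∑ k ∈ Finset.range ℓ, (mfn D k : ℤ) * f k := by
  have h1 : ∀ ν ∈ D, ∑ k ∈ Finset.Ico ν ℓ, f k
      = ∑ k ∈ Finset.range ℓ, if ν ≤ k then f k else 0 := by
    intro ν _
    rw [← Finset.sum_filter]
    apply Finset.sum_congr _ (fun _ _ => rfl)
    ext k
    simp only [Finset.mem_Ico, Finset.mem_filter, Finset.mem_range]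
    tauto
  rw [Finset.sum_congr rfl h1, Finset.sum_comm]
  refine Finset.sum_congr rfl fun k _ => ?_
  rw [← Finset.sum_filter, Finset.sum_const, mfn, nsmul_eq_mul]

lemma expInt_two {ε : ℤ} (hε : ε = 1 ∨ ε = -1) (π : Equiv.Perm (Fin ℓ)) :
    2 * expInt' ℓ ε π = ∑ i : Fin ℓ,
      (2 * (code ℓ π i : ℤ)
        - ((2 * ((i : ℕ) : ℤ) + 1) - ε) * (mfn (descents ℓ π) (i : ℕ) : ℤ)) := by
  classical
  set D := descents ℓ π with hD
  have hA : (ℓ : ℤ) * ((ℓ : ℤ) - ε) / 2 * 2 = (ℓ : ℤ) * ((ℓ : ℤ) - ε) := half_mul_two hε _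
  have hS : (∑ ν ∈ D, (ν : ℤ) * ((ν : ℤ) - ε) / 2) * 2
      = ∑ ν ∈ D, (ν : ℤ) * ((ν : ℤ) - ε) := by
    rw [Finset.sum_mul]
    exact Finset.sum_congr rfl fun ν _ => half_mul_two hε _
  have hinv : (invCount ℓ π : ℤ) = ∑ i : Fin ℓ, (code ℓ π i : ℤ) := by
    rw [invCount_eq_sum_code]; push_cast; rfl
  have step1 : 2 * expInt' ℓ ε π
      = -((ℓ : ℤ) * ((ℓ : ℤ) - ε)) * (D.card : ℤ)
        + (∑ ν ∈ D, (ν : ℤ) * ((ν : ℤ) - ε)) + 2 * ∑ i : Fin ℓ, (code ℓ π i : ℤ) := by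
    rw [expInt', ← hinv, ← hD]
    linear_combination (-(D.card : ℤ)) * hA + hS
  have step2 : -((ℓ : ℤ) * ((ℓ : ℤ) - ε)) * (D.card : ℤ)
        + (∑ ν ∈ D, (ν : ℤ) * ((ν : ℤ) - ε))
      = -∑ ν ∈ D, ((ℓ : ℤ) * ((ℓ : ℤ) - ε) - (ν : ℤ) * ((ν : ℤ) - ε)) := by
    rw [Finset.sum_sub_distrib, Finset.sum_const, nsmul_eq_mul]
    ring
  have step3 : ∑ ν ∈ D, ((ℓ : ℤ) * ((ℓ : ℤ) - ε) - (ν : ℤ) * ((ν : ℤ) - ε))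
      = ∑ k ∈ Finset.range ℓ, (mfn D k : ℤ) * ((2 * (k : ℤ) + 1) - ε) := by
    rw [← swap_sum]
    refine Finset.sum_congr rfl fun ν hν => ?_
    have h := descents_subset π (hD ▸ hν)
    simp only [Finset.mem_Icc] at h
    exact (I1 ε (by omega)).symm
  have step4 : ∑ k ∈ Finset.range ℓ, (mfn D k : ℤ) * ((2 * (k : ℤ) + 1) - ε)
      = ∑ i : Fin ℓ, (mfn D (i : ℕ) : ℤ) * ((2 * ((i : ℕ) : ℤ) + 1) - ε) :=
    (Fin.sum_univ_eq_sum_range (fun k => (mfn D k : ℤ) * ((2 * (k : ℤ) + 1) - ε)) ℓ).symm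
  rw [step1, step2, step3, step4, Finset.sum_sub_distrib, Finset.mul_sum]
  have hcomm : ∑ i : Fin ℓ, (mfn D (i : ℕ) : ℤ) * ((2 * ((i : ℕ) : ℤ) + 1) - ε)
      = ∑ i : Fin ℓ, ((2 * ((i : ℕ) : ℤ) + 1) - ε) * (mfn D (i : ℕ) : ℤ) :=
    Finset.sum_congr rfl fun i _ => mul_comm _ _
  rw [hcomm]
  ring
def p0f (ℓ d k : ℕ) : ℕ := if k < ℓ - d then d + k else ℓ - 1 - k
def p0g (ℓ d v : ℕ) : ℕ := if v < d then ℓ - 1 - v else v - d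

def perm0 (ℓ d : ℕ) (h1 : 1 ≤ d) (h2 : d < ℓ) : Equiv.Perm (Fin ℓ) where
  toFun i := ⟨p0f ℓ d i, by have := i.2; unfold p0f; split <;> omega⟩
  invFun v := ⟨p0g ℓ d v, by have := v.2; unfold p0g; split <;> omega⟩
  left_inv i := by
    have := i.2
    apply Fin.ext
    show p0g ℓ d (p0f ℓ d i) = (i : ℕ)
    simp only [p0f, p0g]
    split_ifs <;> omega
  right_inv v := by
    have := v.2
    apply Fin.ext
    show p0f ℓ d (p0g ℓ d v) = (v : ℕ)
    simp only [p0f, p0g]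
    split_ifs <;> omega

variable {d : ℕ} {h1 : 1 ≤ d} {h2 : d < ℓ}

lemma perm0_tail {i j : Fin ℓ} (hij : j < i) (hi : ℓ - d ≤ (i : ℕ)) :
    perm0 ℓ d h1 h2 i < perm0 ℓ d h1 h2 j := by
  have hi2 := i.2
  have hij' : (j : ℕ) < (i : ℕ) := hij
  show (⟨p0f ℓ d i, _⟩ : Fin ℓ) < ⟨p0f ℓ d j, _⟩
  rw [Fin.mk_lt_mk]
  simp only [p0f]
  split_ifs <;> omega

lemma perm0_head {i j : Fin ℓ} (hij : j < i) (hi : (i : ℕ) < ℓ - d) :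
    perm0 ℓ d h1 h2 j < perm0 ℓ d h1 h2 i := by
  have hij' : (j : ℕ) < (i : ℕ) := hij
  show (⟨p0f ℓ d j, _⟩ : Fin ℓ) < ⟨p0f ℓ d i, _⟩
  rw [Fin.mk_lt_mk]
  simp only [p0f]
  split_ifs <;> omega

lemma code_perm0_head {i : Fin ℓ} (hi : (i : ℕ) < ℓ - d) :
    code ℓ (perm0 ℓ d h1 h2) i = 0 := by
  rw [code, Finset.card_eq_zero, Finset.filter_eq_empty_iff]
  rintro j -
  rintro ⟨hj, hlt⟩
  exact absurd hlt (lt_asymm (perm0_head hj hi))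

lemma code_perm0_tail {i : Fin ℓ} (hi : ℓ - d ≤ (i : ℕ)) :
    code ℓ (perm0 ℓ d h1 h2) i = (i : ℕ) := by
  rw [code]
  have hset : (Finset.univ.filter fun j : Fin ℓ =>
      j < i ∧ perm0 ℓ d h1 h2 i < perm0 ℓ d h1 h2 j) = Finset.Iio i := by
    ext j
    simp only [Finset.mem_filter, Finset.mem_univ, true_and, Finset.mem_Iio]
    exact ⟨fun h => h.1, fun h => ⟨h, perm0_tail h hi⟩⟩
  rw [hset, Fin.card_Iio]

lemma descents_perm0 (hℓ : 2 ≤ ℓ) :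
    descents ℓ (perm0 ℓ d h1 h2) = Finset.Icc (ℓ - d) (ℓ - 1) := by
  ext i
  rw [mem_descents_iff, Finset.mem_Icc]
  constructor
  · rintro ⟨⟨hi1, hi2⟩, hh1, hh2, hlt⟩
    have hv : p0f ℓ d i < p0f ℓ d (i - 1) := hlt
    simp only [p0f] at hv
    split_ifs at hv <;> constructor <;> omega
  · rintro ⟨hi1, hi2⟩
    have hh2 : i < ℓ := by omega
    have hh1 : i - 1 < ℓ := by omega
    refine ⟨⟨by omega, hi2⟩, hh1, hh2, ?_⟩
    show (⟨p0f ℓ d i, _⟩ : Fin ℓ) < ⟨p0f ℓ d (i - 1), _⟩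
    rw [Fin.mk_lt_mk]
    simp only [p0f]
    split_ifs <;> omega

lemma mfn_Icc {k : ℕ} (hk : k < ℓ) (hd : d < ℓ) :
    mfn (Finset.Icc (ℓ - d) (ℓ - 1)) k
      = if ℓ - d ≤ k then k - (ℓ - d) + 1 else 0 := by
  rw [mfn]
  split_ifs with h
  · have hset : (Finset.Icc (ℓ - d) (ℓ - 1)).filter (· ≤ k) = Finset.Icc (ℓ - d) k := by
      ext ν
      simp only [Finset.mem_filter, Finset.mem_Icc]
      omega
    rw [hset, Nat.card_Icc]
    omega
  · rw [Finset.card_eq_zero, Finset.filter_eq_empty_iff]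
    intro ν hν
    simp only [Finset.mem_Icc] at hν
    omega
lemma keyIneq {ε : ℤ} (hε : ε = 1 ∨ ε = -1) {ℓ d k b m : ℕ}
    (hd1 : 1 ≤ d) (hdℓ : d < ℓ) (hk : k < ℓ) (hb : b ≤ k) (h0 : m = 0 → b = 0)
    (hlow : d ≤ m + (ℓ - 1 - k)) :
    2 * (b : ℤ) - ((2 * (k : ℤ) + 1) - ε) * (m : ℤ)
      ≤ (if ℓ - d ≤ k then 2 * (k : ℤ) - ((2 * (k : ℤ) + 1) - ε) * ((k - (ℓ - d) + 1 : ℕ) : ℤ)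
          else 0) := by
  have hε1 : ε ≤ 1 := by rcases hε with rfl | rfl <;> omega
  have hW : (0 : ℤ) ≤ (2 * (k : ℤ) + 1) - ε := by
    have : (0 : ℤ) ≤ (k : ℤ) := Int.natCast_nonneg k
    omega
  rcases Nat.eq_zero_or_pos m with hm | hm
  · subst hm
    have hb0 : b = 0 := h0 rfl
    subst hb0
    have : ¬ ℓ - d ≤ k := by omega
    rw [if_neg this]
    simp
  · split_ifs with h
    · have hm' : (k - (ℓ - d) + 1 : ℕ) ≤ m := by omega
      have hWm : ((2 * (k : ℤ) + 1) - ε) * ((k - (ℓ - d) + 1 : ℕ) : ℤ)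
          ≤ ((2 * (k : ℤ) + 1) - ε) * (m : ℤ) :=
        mul_le_mul_of_nonneg_left (by exact_mod_cast hm') hW
      have hb' : (b : ℤ) ≤ (k : ℤ) := by exact_mod_cast hb
      linarith
    · have hW1 : ((2 * (k : ℤ) + 1) - ε) * 1 ≤ ((2 * (k : ℤ) + 1) - ε) * (m : ℤ) :=
        mul_le_mul_of_nonneg_left (by exact_mod_cast hm) hW
      have hb' : (b : ℤ) ≤ (k : ℤ) := by exact_mod_cast hb
      linarith

lemma keyEq {ε : ℤ} (hε : ε = 1 ∨ ε = -1) {ℓ d k b m : ℕ}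
    (hd1 : 1 ≤ d) (hdℓ : d < ℓ) (hk : k < ℓ) (hb : b ≤ k) (h0 : m = 0 → b = 0)
    (hlow : d ≤ m + (ℓ - 1 - k)) (hk0 : k = 0 → m = 0)
    (heq : 2 * (b : ℤ) - ((2 * (k : ℤ) + 1) - ε) * (m : ℤ)
      = (if ℓ - d ≤ k then 2 * (k : ℤ) - ((2 * (k : ℤ) + 1) - ε) * ((k - (ℓ - d) + 1 : ℕ) : ℤ)
          else 0)) :
    (ℓ - d ≤ k → (b = k ∧ m = k - (ℓ - d) + 1))
      ∧ (k < ℓ - d → (m = 0 ∨ (ε = 1 ∧ m = 1 ∧ b = k))) := by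
  have hε1 : ε ≤ 1 := by rcases hε with rfl | rfl <;> omega
  have hW : (0 : ℤ) ≤ (2 * (k : ℤ) + 1) - ε := by
    have : (0 : ℤ) ≤ (k : ℤ) := Int.natCast_nonneg k
    omega
  have hb' : (b : ℤ) ≤ (k : ℤ) := by exact_mod_cast hb
  constructor
  · intro h
    rw [if_pos h] at heq
    have hm' : (k - (ℓ - d) + 1 : ℕ) ≤ m := by omega
    have hWm : ((2 * (k : ℤ) + 1) - ε) * ((k - (ℓ - d) + 1 : ℕ) : ℤ)
        ≤ ((2 * (k : ℤ) + 1) - ε) * (m : ℤ) :=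
      mul_le_mul_of_nonneg_left (by exact_mod_cast hm') hW
    have hbk : (b : ℤ) = (k : ℤ) := by linarith
    have hWeq : ((2 * (k : ℤ) + 1) - ε) * (m : ℤ)
        = ((2 * (k : ℤ) + 1) - ε) * ((k - (ℓ - d) + 1 : ℕ) : ℤ) := by linarith
    have hk1 : 1 ≤ k := by omega
    have hWne : ((2 * (k : ℤ) + 1) - ε) ≠ 0 := by
      have : (1 : ℤ) ≤ (k : ℤ) := by exact_mod_cast hk1
      omega
    have hmeq : (m : ℤ) = ((k - (ℓ - d) + 1 : ℕ) : ℤ) := mul_left_cancel₀ hWne hWeq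
    exact ⟨by exact_mod_cast hbk, by exact_mod_cast hmeq⟩
  · intro h
    rw [if_neg (by omega)] at heq
    rcases Nat.eq_zero_or_pos m with hm | hm
    · exact Or.inl hm
    · right
      have hm1 : (1 : ℤ) ≤ (m : ℤ) := by exact_mod_cast hm
      rcases hε with rfl | rfl
      · -- ε = 1, weight is 2k
        have hk1 : 1 ≤ k := by
          by_contra hcon
          have hk0' : k = 0 := by omega
          have := hk0 hk0'
          omega
        have hk1' : (1 : ℤ) ≤ (k : ℤ) := by exact_mod_cast hk1
        have hW1 : (2 * (k : ℤ) + 1 - 1) * 1 ≤ (2 * (k : ℤ) + 1 - 1) * (m : ℤ) :=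
          mul_le_mul_of_nonneg_left hm1 (by omega)
        have hbk : (b : ℤ) = (k : ℤ) := by linarith
        have hprod : (2 * (k : ℤ)) * (m : ℤ) = (2 * (k : ℤ)) * 1 := by linarith
        have hmeq : (m : ℤ) = 1 := mul_left_cancel₀ (by omega : (2 * (k : ℤ)) ≠ 0) hprod
        exact ⟨rfl, by exact_mod_cast hmeq, by exact_mod_cast hbk⟩
      · -- ε = -1 : contradiction
        exfalso
        have hW1 : (2 * (k : ℤ) + 1 - (-1)) * 1 ≤ (2 * (k : ℤ) + 1 - (-1)) * (m : ℤ) :=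
          mul_le_mul_of_nonneg_left hm1 (by positivity)
        linarith
lemma val_eq_card_lt (σ : Equiv.Perm (Fin ℓ)) (i : Fin ℓ) :
    ((σ i : Fin ℓ) : ℕ) = (Finset.univ.filter fun j : Fin ℓ => σ j < σ i).card := by
  have hcard : (Finset.univ.filter fun j : Fin ℓ => σ j < σ i).card
      = (Finset.Iio (σ i)).card := by
    apply Finset.card_bij (fun j _ => σ j)
    · intro j hj
      simp only [Finset.mem_filter] at hj
      exact Finset.mem_Iio.2 hj.2
    · intro j _ j' _ h
      exact Equiv.injective σ h
    · intro v hv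
      refine ⟨σ⁻¹ v, ?_, by simp⟩
      simp only [Finset.mem_filter, Finset.mem_univ, true_and, Equiv.Perm.inv_def, Equiv.apply_symm_apply]
      exact Finset.mem_Iio.1 hv
  rw [hcard, Fin.card_Iio]

/-- The structural property forced by the extremal codes. -/
def StructP (ℓ d : ℕ) (σ : Equiv.Perm (Fin ℓ)) : Prop :=
  ∀ j i : Fin ℓ, j < i →
    (ℓ - d ≤ (i : ℕ) → σ i < σ j) ∧ ((i : ℕ) < ℓ - d → σ j < σ i)

lemma structP_lt_iff {d : ℕ} {σ : Equiv.Perm (Fin ℓ)} (hσ : StructP ℓ d σ)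
    (i j : Fin ℓ) :
    σ j < σ i ↔ ((j < i ∧ (i : ℕ) < ℓ - d) ∨ (i < j ∧ ℓ - d ≤ (j : ℕ))) := by
  constructor
  · intro hlt
    rcases lt_trichotomy j i with h | h | h
    · left
      refine ⟨h, ?_⟩
      by_contra hcon
      push_neg at hcon
      exact absurd hlt (lt_asymm ((hσ j i h).1 hcon))
    · subst h
      exact absurd hlt (lt_irrefl _)
    · right
      refine ⟨h, ?_⟩
      by_contra hcon
      push_neg at hcon
      exact absurd hlt (lt_asymm ((hσ i j h).2 hcon))
  · rintro (⟨h, hc⟩ | ⟨h, hc⟩)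
    · exact (hσ j i h).2 hc
    · exact (hσ i j h).1 hc

lemma structP_unique {d : ℕ} {σ τ : Equiv.Perm (Fin ℓ)}
    (hσ : StructP ℓ d σ) (hτ : StructP ℓ d τ) : σ = τ := by
  apply Equiv.ext
  intro i
  apply Fin.ext
  rw [val_eq_card_lt σ i, val_eq_card_lt τ i]
  congr 1
  ext j
  simp only [Finset.mem_filter, Finset.mem_univ, true_and]
  rw [structP_lt_iff hσ, structP_lt_iff hτ]

lemma perm0_structP (hℓ : 2 ≤ ℓ) {d : ℕ} (h1 : 1 ≤ d) (h2 : d < ℓ) :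
    StructP ℓ d (perm0 ℓ d h1 h2) := by
  intro j i hij
  exact ⟨fun h => perm0_tail hij h, fun h => perm0_head hij h⟩
lemma structP_of_codes {d : ℕ} (π : Equiv.Perm (Fin ℓ))
    (hc0 : ∀ i : Fin ℓ, (i : ℕ) < ℓ - d → code ℓ π i = 0)
    (hck : ∀ i : Fin ℓ, ℓ - d ≤ (i : ℕ) → code ℓ π i = (i : ℕ)) :
    StructP ℓ d π := by
  intro j i hij
  constructor
  · intro h
    have hc := hck i h
    have hsub : (Finset.univ.filter fun j' : Fin ℓ => j' < i ∧ π i < π j')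
        ⊆ Finset.Iio i := by
      intro j' hj'
      simp only [Finset.mem_filter] at hj'
      exact Finset.mem_Iio.2 hj'.2.1
    have heqs : (Finset.univ.filter fun j' : Fin ℓ => j' < i ∧ π i < π j')
        = Finset.Iio i := by
      apply Finset.eq_of_subset_of_card_le hsub
      rw [Fin.card_Iio, ← hc]
      rfl
    have hj : j ∈ (Finset.univ.filter fun j' : Fin ℓ => j' < i ∧ π i < π j') := by
      rw [heqs]
      exact Finset.mem_Iio.2 hij
    exact (Finset.mem_filter.1 hj).2.2
  · intro h
    have hc := hc0 i h
    rw [code, Finset.card_eq_zero, Finset.filter_eq_empty_iff] at hc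
    by_contra hcon
    have hne : π j ≠ π i := (Equiv.injective π).ne (ne_of_lt hij)
    have hgt : π i < π j := by
      rcases lt_or_gt_of_ne hne with h' | h'
      · exact absurd h' hcon
      · exact h'
    exact hc (Finset.mem_univ j) ⟨hij, hgt⟩

lemma sum_range_cast_q (n : ℕ) : ∑ t ∈ Finset.range n, (t : ℚ) = (n : ℚ) * ((n : ℚ) - 1) / 2 := by
  induction n with
  | zero => simp
  | succ m ih => rw [Finset.sum_range_succ, ih]; push_cast; ring

lemma sum_range_sq_q (n : ℕ) :
    ∑ t ∈ Finset.range n, (t : ℚ) ^ 2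
      = (n : ℚ) * ((n : ℚ) - 1) * (2 * (n : ℚ) - 1) / 6 := by
  induction n with
  | zero => simp
  | succ m ih => rw [Finset.sum_range_succ, ih]; push_cast; ring
lemma perm0_value {d : ℕ} {ε : ℤ} (hℓ : 2 ≤ ℓ) (hε : ε = 1 ∨ ε = -1)
    (h1 : 1 ≤ d) (h2 : d < ℓ) :
    (expInt' ℓ ε (perm0 ℓ d h1 h2) : ℚ)
      = (d : ℚ) * (-(ℓ : ℚ) * ((d : ℚ) - 1) / 2
          + (1 / 6 : ℚ) * ((d : ℚ) + 1) * ((d : ℚ) - (5 - 3 * (ε : ℚ)) / 2)) := by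
  set π₀ := perm0 ℓ d h1 h2 with hπ₀
  have hD : descents ℓ π₀ = Finset.Icc (ℓ - d) (ℓ - 1) := descents_perm0 hℓ
  have hcard : (descents ℓ π₀).card = d := by rw [hD, Nat.card_Icc]; omega
  have hinv : invCount ℓ π₀ = ∑ ν ∈ Finset.Icc (ℓ - d) (ℓ - 1), ν := by
    rw [invCount_eq_sum_code]
    have hstep : ∀ i ∈ (Finset.univ : Finset (Fin ℓ)),
        code ℓ π₀ i = if ℓ - d ≤ (i : ℕ) then (i : ℕ) else 0 := by
      intro i _
      split_ifs with h
      · exact code_perm0_tail h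
      · exact code_perm0_head (by omega)
    rw [Finset.sum_congr rfl hstep,
      Fin.sum_univ_eq_sum_range (fun k => if ℓ - d ≤ k then k else 0) ℓ,
      ← Finset.sum_filter]
    congr 1
    ext ν
    simp only [Finset.mem_filter, Finset.mem_range, Finset.mem_Icc]
    omega
  have h2e : 2 * expInt' ℓ ε π₀
      = -((ℓ : ℤ) * ((ℓ : ℤ) - ε)) * (d : ℤ)
        + ∑ ν ∈ Finset.Icc (ℓ - d) (ℓ - 1), ((ν : ℤ) * ((ν : ℤ) - ε) + 2 * (ν : ℤ)) := by
    rw [expInt', hcard, hinv, hD]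
    have hA := half_mul_two hε (ℓ : ℤ)
    have hS : (∑ ν ∈ Finset.Icc (ℓ - d) (ℓ - 1), (ν : ℤ) * ((ν : ℤ) - ε) / 2) * 2
        = ∑ ν ∈ Finset.Icc (ℓ - d) (ℓ - 1), (ν : ℤ) * ((ν : ℤ) - ε) := by
      rw [Finset.sum_mul]
      exact Finset.sum_congr rfl fun ν _ => half_mul_two hε _
    have hc : ((∑ ν ∈ Finset.Icc (ℓ - d) (ℓ - 1), ν : ℕ) : ℤ)
        = ∑ ν ∈ Finset.Icc (ℓ - d) (ℓ - 1), (ν : ℤ) := by push_cast; rfl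
    have hc2 : ∑ ν ∈ Finset.Icc (ℓ - d) (ℓ - 1), 2 * (ν : ℤ)
        = 2 * ∑ ν ∈ Finset.Icc (ℓ - d) (ℓ - 1), (ν : ℤ) := by
      rw [Finset.mul_sum]
    rw [Finset.sum_add_distrib, hc, hc2]
    linear_combination (-(d : ℤ)) * hA + hS
  have hq := congrArg (fun z : ℤ => (z : ℚ)) h2e
  push_cast at hq
  have hIcc : Finset.Icc (ℓ - d) (ℓ - 1) = Finset.Ico (ℓ - d) ℓ := by
    ext ν
    simp only [Finset.mem_Icc, Finset.mem_Ico]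
    omega
  rw [hIcc, Finset.sum_Ico_eq_sum_range, show ℓ - (ℓ - d) = d from by omega] at hq
  have hterm : ∀ t ∈ Finset.range d,
      ((((ℓ - d) + t : ℕ) : ℚ) * ((((ℓ - d) + t : ℕ) : ℚ) - (ε : ℚ))
          + 2 * (((ℓ - d) + t : ℕ) : ℚ))
        = (t : ℚ) ^ 2 + (2 * (((ℓ - d : ℕ)) : ℚ) + 2 - (ε : ℚ)) * (t : ℚ)
          + ((((ℓ - d : ℕ)) : ℚ) * ((((ℓ - d : ℕ)) : ℚ) - (ε : ℚ))
              + 2 * (((ℓ - d : ℕ)) : ℚ)) := by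
    intro t _
    push_cast
    ring
  rw [Finset.sum_congr rfl hterm, Finset.sum_add_distrib, Finset.sum_add_distrib,
    ← Finset.mul_sum, Finset.sum_const, sum_range_cast_q, sum_range_sq_q,
    nsmul_eq_mul, Finset.card_range] at hq
  have hAq : (((ℓ - d : ℕ)) : ℚ) = (ℓ : ℚ) - (d : ℚ) := by
    push_cast [Nat.cast_sub (le_of_lt h2)]
    ring
  rw [hAq] at hq
  linear_combination (1 / 2 : ℚ) * hq
lemma term0_eq {d : ℕ} {ε : ℤ} (hℓ : 2 ≤ ℓ) (h1 : 1 ≤ d) (h2 : d < ℓ) (i : Fin ℓ) :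
    2 * (code ℓ (perm0 ℓ d h1 h2) i : ℤ)
      - ((2 * ((i : ℕ) : ℤ) + 1) - ε) * (mfn (descents ℓ (perm0 ℓ d h1 h2)) (i : ℕ) : ℤ)
    = if ℓ - d ≤ (i : ℕ)
        then 2 * ((i : ℕ) : ℤ)
          - ((2 * ((i : ℕ) : ℤ) + 1) - ε) * (((i : ℕ) - (ℓ - d) + 1 : ℕ) : ℤ)
        else 0 := by
  rw [descents_perm0 hℓ, mfn_Icc i.2 h2]
  split_ifs with h
  · rw [code_perm0_tail h]
  · rw [code_perm0_head (by omega)]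
    simp

lemma term_le {d : ℕ} {ε : ℤ} (hℓ : 2 ≤ ℓ) (hε : ε = 1 ∨ ε = -1)
    (h1 : 1 ≤ d) (h2 : d < ℓ) (π : Equiv.Perm (Fin ℓ))
    (hcard : (descents ℓ π).card = d) (i : Fin ℓ) :
    2 * (code ℓ π i : ℤ)
        - ((2 * ((i : ℕ) : ℤ) + 1) - ε) * (mfn (descents ℓ π) (i : ℕ) : ℤ)
      ≤ 2 * (code ℓ (perm0 ℓ d h1 h2) i : ℤ)
        - ((2 * ((i : ℕ) : ℤ) + 1) - ε)
            * (mfn (descents ℓ (perm0 ℓ d h1 h2)) (i : ℕ) : ℤ) := by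
  rw [term0_eq hℓ h1 h2 i]
  exact keyIneq hε h1 h2 i.2 (code_le π i)
    (fun hm => code_eq_zero_of_mfn_zero π (i : ℕ) i.2 hm)
    (hcard ▸ mfn_lower π (i : ℕ))

lemma global_le {d : ℕ} {ε : ℤ} (hℓ : 2 ≤ ℓ) (hε : ε = 1 ∨ ε = -1)
    (h1 : 1 ≤ d) (h2 : d < ℓ) (π : Equiv.Perm (Fin ℓ))
    (hcard : (descents ℓ π).card = d) :
    expInt' ℓ ε π ≤ expInt' ℓ ε (perm0 ℓ d h1 h2) := by
  have hsum := Finset.sum_le_sum (fun i _ => term_le hℓ hε h1 h2 π hcard i)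
    (s := (Finset.univ : Finset (Fin ℓ)))
  have e1 := expInt_two hε π
  have e0 := expInt_two hε (perm0 ℓ d h1 h2)
  linarith

lemma global_unique {d : ℕ} {ε : ℤ} (hℓ : 2 ≤ ℓ) (hε : ε = 1 ∨ ε = -1)
    (h1 : 1 ≤ d) (h2 : d < ℓ) (π : Equiv.Perm (Fin ℓ))
    (hcard : (descents ℓ π).card = d)
    (heq : expInt' ℓ ε π = expInt' ℓ ε (perm0 ℓ d h1 h2)) :
    π = perm0 ℓ d h1 h2 := by
  have e1 := expInt_two hε π
  have e0 := expInt_two hε (perm0 ℓ d h1 h2)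
  have hsum : ∑ i : Fin ℓ,
      (2 * (code ℓ π i : ℤ)
        - ((2 * ((i : ℕ) : ℤ) + 1) - ε) * (mfn (descents ℓ π) (i : ℕ) : ℤ))
    = ∑ i : Fin ℓ,
      (2 * (code ℓ (perm0 ℓ d h1 h2) i : ℤ)
        - ((2 * ((i : ℕ) : ℤ) + 1) - ε)
            * (mfn (descents ℓ (perm0 ℓ d h1 h2)) (i : ℕ) : ℤ)) := by
    rw [← e1, ← e0, heq]
  have hpt := (Finset.sum_eq_sum_iff_of_le
    (fun i _ => term_le hℓ hε h1 h2 π hcard i)).1 hsum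
  have hEk : ∀ (k : ℕ) (hk : k < ℓ),
      (ℓ - d ≤ k → code ℓ π ⟨k, hk⟩ = k ∧ mfn (descents ℓ π) k = k - (ℓ - d) + 1)
        ∧ (k < ℓ - d → (mfn (descents ℓ π) k = 0
            ∨ (ε = 1 ∧ mfn (descents ℓ π) k = 1 ∧ code ℓ π ⟨k, hk⟩ = k))) := by
    intro k hk
    have h := hpt ⟨k, hk⟩ (Finset.mem_univ _)
    rw [term0_eq hℓ h1 h2 ⟨k, hk⟩] at h
    exact keyEq hε h1 h2 hk (code_le π ⟨k, hk⟩)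
      (fun hm => code_eq_zero_of_mfn_zero π k hk hm)
      (hcard ▸ mfn_lower π k)
      (fun h0 => mfn_zero_of_lt_one π h0) h
  have hk1 : ℓ - d < ℓ := by omega
  have hk2 : ℓ - d - 1 < ℓ := by omega
  have hc0 : code ℓ π ⟨ℓ - d, hk1⟩ = ℓ - d := ((hEk (ℓ - d) hk1).1 (le_refl _)).1
  have hm1 : mfn (descents ℓ π) (ℓ - d) = 1 := by
    have := ((hEk (ℓ - d) hk1).1 (le_refl _)).2
    omega
  have hdesc : (ℓ - d) ∈ descents ℓ π := by
    by_contra hnd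
    have hnd' : ¬ π ⟨ℓ - d, hk1⟩ < π ⟨ℓ - d - 1, hk2⟩ := by
      intro hlt
      exact hnd ((mem_descents_iff π).2 ⟨⟨by omega, by omega⟩, hk2, hk1, hlt⟩)
    have hle := code_le_of_not_descent π hk2 hk1 (by omega) hnd'
    have hlep := code_le π ⟨ℓ - d - 1, hk2⟩
    simp only [] at hlep
    omega
  have hm0 : ∀ k, k < ℓ - d → mfn (descents ℓ π) k = 0 := by
    intro k hklt
    rcases (hEk k (by omega)).2 hklt with h | ⟨hε1, hmk1, hbk⟩
    · exact h
    · exfalso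
      have hpos : 0 < ((descents ℓ π).filter (· ≤ k)).card := by
        have : mfn (descents ℓ π) k = ((descents ℓ π).filter (· ≤ k)).card := rfl
        omega
      obtain ⟨ν, hν⟩ := Finset.card_pos.1 hpos
      have hνD := (Finset.mem_filter.1 hν).1
      have hνk : ν ≤ k := (Finset.mem_filter.1 hν).2
      have hpair : ({ν, ℓ - d} : Finset ℕ) ⊆ (descents ℓ π).filter (· ≤ ℓ - d) := by
        intro x hx
        rcases Finset.mem_insert.1 hx with rfl | hx
        · exact Finset.mem_filter.2 ⟨hνD, by omega⟩
        · rw [Finset.mem_singleton] at hx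
          subst hx
          exact Finset.mem_filter.2 ⟨hdesc, le_refl _⟩
      have hcard2 : ({ν, ℓ - d} : Finset ℕ).card = 2 := Finset.card_pair (by omega)
      have hle2 : ({ν, ℓ - d} : Finset ℕ).card ≤ mfn (descents ℓ π) (ℓ - d) :=
        Finset.card_le_card hpair
      omega
  have hc0all : ∀ i : Fin ℓ, (i : ℕ) < ℓ - d → code ℓ π i = 0 :=
    fun i hi => code_eq_zero_of_mfn_zero π (i : ℕ) i.2 (hm0 _ hi)
  have hckall : ∀ i : Fin ℓ, ℓ - d ≤ (i : ℕ) → code ℓ π i = (i : ℕ) :=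
    fun i hi => ((hEk (i : ℕ) i.2).1 hi).1
  exact structP_unique (structP_of_codes π hc0all hckall) (perm0_structP hℓ h1 h2)

end ASH

/-- Among permutations `π ∈ S_ℓ` with `#D(π) = d`, the maximum of the attached exponent
equals `j_+^{(ε)}(ℓ,d) = d·(−ℓ(d−1)/2 + (1/6)(d+1)(d − (5−3ε)/2))`, attained by exactly
one permutation. -/
theorem expInt_max (ℓ : ℕ) (hℓ : 2 ≤ ℓ) (ε : ℤ) (hε : ε = 1 ∨ ε = -1)
    (d : ℕ) (hd1 : 1 ≤ d) (hd2 : d ≤ ℓ - 1) :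
    ∃ π₀ : Equiv.Perm (Fin ℓ), (descents ℓ π₀).card = d ∧
      (expInt ℓ ε π₀ : ℚ)
        = (d : ℚ) * (-(ℓ : ℚ) * ((d : ℚ) - 1) / 2
            + (1 / 6 : ℚ) * ((d : ℚ) + 1) * ((d : ℚ) - (5 - 3 * (ε : ℚ)) / 2)) ∧
      (∀ π : Equiv.Perm (Fin ℓ), (descents ℓ π).card = d →
        expInt ℓ ε π ≤ expInt ℓ ε π₀) ∧
      (∀ π : Equiv.Perm (Fin ℓ), (descents ℓ π).card = d →
        expInt ℓ ε π = expInt ℓ ε π₀ → π = π₀) := by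
  have h2 : d < ℓ := by omega
  have hE : ∀ π : Equiv.Perm (Fin ℓ), expInt ℓ ε π = ASH.expInt' ℓ ε π := fun _ => rfl
  refine ⟨ASH.perm0 ℓ d hd1 h2, ?_, ?_, ?_, ?_⟩
  · rw [ASH.descents_perm0 hℓ, Nat.card_Icc]
    omega
  · rw [hE]
    exact ASH.perm0_value hℓ hε hd1 h2
  · intro π hπ
    rw [hE, hE]
    exact ASH.global_le hℓ hε hd1 h2 π hπ
  · intro π hπ heq
    rw [hE, hE] at heq
    exact ASH.global_unique hℓ hε hd1 h2 π hπ heq
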